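/- For every R' > 0 there exists a natural number N = N(R'), independent of the point, such that every z ∈ ℍ² belongs to at most N of the rectangles 𝓡_{j,k}(R'), i.e. #{(j,k) ∈ ℤ² : z ∈ 𝓡_{j,k}(R')} ≤ N. -/

import Mathlib

open MeasureTheory Real Set

/-- The hyperbolic half-plane, as a subset of `ℝ × ℝ`. -/
def H2 : Set (ℝ × ℝ) := {z | 0 < z.2}

/-- The rectangle `𝓡_{j,k}(R')`. -/
noncomputable def rect (R' : ℝ) (j k : ℤ) : Set (ℝ × ℝ) :=
  {z | |z.1 - (2 : ℝ) ^ (R' * (j : ℝ)) * (k : ℝ)| < (2 : ℝ) ^ (R' * (j : ℝ)) ∧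
       (2 : ℝ) ^ (R' * ((j : ℝ) - 1)) < z.2 ∧
       z.2 < (3 : ℝ) ^ R' * (2 : ℝ) ^ (R' * ((j : ℝ) - 1))}

lemma int_in_unit_window {t : ℝ} {j : ℤ} (h1 : t - 1 < (j : ℝ)) (h2 : (j : ℝ) < t + 1) :
    j = ⌊t⌋ ∨ j = ⌊t⌋ + 1 := by
  have hf : (⌊t⌋ : ℝ) ≤ t := Int.floor_le t
  have hf2 : t < ⌊t⌋ + 1 := Int.lt_floor_add_one t
  have l1 : ((⌊t⌋ - 1 : ℤ) : ℝ) < (j : ℝ) := by push_cast; linarith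
  have l2 : (j : ℝ) < ((⌊t⌋ + 2 : ℤ) : ℝ) := by push_cast; linarith
  have i1 : ⌊t⌋ - 1 < j := by exact_mod_cast l1
  have i2 : j < ⌊t⌋ + 2 := by exact_mod_cast l2
  omega

/-- The covering of the half-plane by the rectangles `𝓡_{j,k}(R')` has bounded overlap:
there is `N = N(R')` such that every point belongs to at most `N` of the rectangles. -/
theorem rects_bounded_overlap (R' : ℝ) (hR' : 0 < R') :
    ∃ N : ℕ, ∀ z : ℝ × ℝ, z ∈ H2 →
      {p : ℤ × ℤ | z ∈ rect R' p.1 p.2}.encard ≤ N := by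
  refine ⟨4, fun z hz => ?_⟩
  have hy : 0 < z.2 := hz
  have hlog2 : (0:ℝ) < Real.log 2 := Real.log_pos (by norm_num)
  have hd : (0:ℝ) < R' * Real.log 2 := by positivity
  set t : ℝ := Real.log z.2 / (R' * Real.log 2) with ht
  set f : ℤ → ℤ := fun j => ⌊z.1 / (2:ℝ) ^ (R' * (j : ℝ))⌋ with hf
  have hsub : {p : ℤ × ℤ | z ∈ rect R' p.1 p.2} ⊆
      ({(⌊t⌋, f ⌊t⌋), (⌊t⌋, f ⌊t⌋ + 1), (⌊t⌋ + 1, f (⌊t⌋ + 1)),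
        (⌊t⌋ + 1, f (⌊t⌋ + 1) + 1)} : Set (ℤ × ℤ)) := by
    rintro ⟨j, k⟩ ⟨h1, h2, h3⟩
    simp only at h1 h2 h3
    -- j analysis
    have hlogy2 : R' * ((j : ℝ) - 1) * Real.log 2 < Real.log z.2 := by
      have := Real.log_lt_log (Real.rpow_pos_of_pos two_pos _) h2
      rwa [Real.log_rpow two_pos] at this
    have hlogy3 : Real.log z.2 < R' * Real.log 3 + R' * ((j : ℝ) - 1) * Real.log 2 := by
      have := Real.log_lt_log hy h3
      rwa [Real.log_mul (ne_of_gt (Real.rpow_pos_of_pos (by norm_num) _))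
        (ne_of_gt (Real.rpow_pos_of_pos two_pos _)), Real.log_rpow (by norm_num),
        Real.log_rpow two_pos] at this
    have hlog34 : Real.log 3 < 2 * Real.log 2 := by
      have h4 : Real.log 3 < Real.log 4 := Real.log_lt_log (by norm_num) (by norm_num)
      have : Real.log 4 = 2 * Real.log 2 := by
        rw [show (4:ℝ) = 2 ^ 2 by norm_num, Real.log_pow]; push_cast; ring
      linarith
    have hjlt' : (j : ℝ) - 1 < t := by
      rw [ht, lt_div_iff₀ hd]; nlinarith
    have hjgt' : t < (j : ℝ) + 1 := by
      rw [ht, div_lt_iff₀ hd]; nlinarith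
    have hjcases := int_in_unit_window (t := t) (j := j) (by linarith) (by linarith)
    -- k analysis
    set P : ℝ := (2:ℝ) ^ (R' * (j : ℝ)) with hPdef
    have hP : (0:ℝ) < P := Real.rpow_pos_of_pos two_pos _
    rw [abs_lt] at h1
    set c : ℝ := z.1 / P with hc
    have hkgt : c - 1 < (k : ℝ) := by
      rw [hc, sub_lt_iff_lt_add, div_lt_iff₀ hP]
      nlinarith [h1.2]
    have hklt : (k : ℝ) < c + 1 := by
      have : ((k : ℝ) - 1) * P < z.1 := by nlinarith [h1.1]
      have h' : (k : ℝ) - 1 < c := by rw [hc, lt_div_iff₀ hP]; exact this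
      linarith
    have hkcases := int_in_unit_window hkgt hklt
    have hfc : f j = ⌊c⌋ := rfl
    have hkey : k = f j ∨ k = f j + 1 := by
      rcases hkcases with hk | hk
      · exact Or.inl (by rw [hk, hfc])
      · exact Or.inr (by rw [hk, hfc])
    rcases hjcases with hj | hj <;> subst hj <;> rcases hkey with hk | hk <;> subst hk <;>
      simp [Set.mem_insert_iff]
  refine le_trans (Set.encard_mono hsub) ?_
  refine le_trans (Set.encard_insert_le _ _) ?_
  refine le_trans (add_le_add_left (Set.encard_insert_le _ _) 1) ?_
  refine le_trans (add_le_add_left (add_le_add_left (Set.encard_insert_le _ _) 1) 1) ?_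
  refine le_trans (add_le_add_left (add_le_add_left (add_le_add_left
    (le_of_eq (Set.encard_singleton _)) 1) 1) 1) ?_
  norm_num
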